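/- For every sequential vset-automaton A there exists a disjunctive functional vset-automaton A′ such that ⟦A′⟧(d) = ⟦A⟧(d) for every document d. -/

import Mathlib

namespace Spanners

open scoped Classical

/-! ### Spans and mappings -/

abbrev Span := ℕ × ℕ

abbrev VMapping := ℕ → Option Span

def emptyMapping : VMapping := fun _ => none

def mapDom (μ : VMapping) : Set ℕ := {x | μ x ≠ none}

/-- Two mappings are compatible if they agree on every common variable. -/
def Compatible (μ1 μ2 : VMapping) : Prop :=
  ∀ x s1 s2, μ1 x = some s1 → μ2 x = some s2 → s1 = s2

def DisjointDom (μ1 μ2 : VMapping) : Prop :=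
  ∀ x, μ1 x = none ∨ μ2 x = none

def munion (μ1 μ2 : VMapping) : VMapping := fun x =>
  match μ1 x with
  | some s => some s
  | none => μ2 x

def minsert (x : ℕ) (s : Span) (μ : VMapping) : VMapping :=
  fun y => if y = x then some s else μ y

/-- Natural join of two sets of mappings. -/
def joinSet (S1 S2 : Set VMapping) : Set VMapping :=
  {μ | ∃ μ1 ∈ S1, ∃ μ2 ∈ S2, Compatible μ1 μ2 ∧ μ = munion μ1 μ2}

/-- Difference of two sets of mappings. -/
def diffSet (S1 S2 : Set VMapping) : Set VMapping :=
  {μ1 | μ1 ∈ S1 ∧ ∀ μ2 ∈ S2, ¬ Compatible μ1 μ2}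

/-- Restriction of a mapping to a set of variables. -/
noncomputable def restrictMap (μ : VMapping) (V : Set ℕ) : VMapping :=
  fun x => if x ∈ V then μ x else none

/-- Projection of a set of mappings to a set of variables. -/
def projSet (V : Set ℕ) (S : Set VMapping) : Set VMapping :=
  {μ' | ∃ μ ∈ S, μ' = restrictMap μ V}

/-! ### Regex formulas -/

inductive RGX (Sig : Type) where
  | empty : RGX Sig
  | eps : RGX Sig
  | letter : Sig → RGX Sig
  | union : RGX Sig → RGX Sig → RGX Sig
  | concat : RGX Sig → RGX Sig → RGX Sig
  | star : RGX Sig → RGX Sig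
  | bind : ℕ → RGX Sig → RGX Sig

variable {Sig : Type}

def RGX.vars : RGX Sig → Finset ℕ
  | .empty => ∅
  | .eps => ∅
  | .letter _ => ∅
  | .union a b => a.vars ∪ b.vars
  | .concat a b => a.vars ∪ b.vars
  | .star a => a.vars
  | .bind x a => insert x a.vars

def RGX.size : RGX Sig → ℕ
  | .empty => 1
  | .eps => 1
  | .letter _ => 1
  | .union a b => a.size + b.size + 1
  | .concat a b => a.size + b.size + 1
  | .star a => a.size + 1
  | .bind _ a => a.size + 1

/-- The schemaless semantics `⟨α⟩(d)`: `RMatch α d i j μ` means `([i,j⟩, μ) ∈ ⟨α⟩(d)`. -/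
inductive RMatch : RGX Sig → List Sig → ℕ → ℕ → VMapping → Prop where
  | eps {d : List Sig} {i : ℕ} (h1 : 1 ≤ i) (h2 : i ≤ d.length + 1) :
      RMatch .eps d i i emptyMapping
  | letter {d : List Sig} {i : ℕ} {σ : Sig} (h1 : 1 ≤ i) (h2 : d[i - 1]? = some σ) :
      RMatch (.letter σ) d i (i + 1) emptyMapping
  | unionL {a b : RGX Sig} {d : List Sig} {i j : ℕ} {μ : VMapping}
      (h : RMatch a d i j μ) : RMatch (.union a b) d i j μ
  | unionR {a b : RGX Sig} {d : List Sig} {i j : ℕ} {μ : VMapping}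
      (h : RMatch b d i j μ) : RMatch (.union a b) d i j μ
  | concat {a b : RGX Sig} {d : List Sig} {i k j : ℕ} {μ1 μ2 : VMapping}
      (h1 : RMatch a d i k μ1) (h2 : RMatch b d k j μ2) (hd : DisjointDom μ1 μ2) :
      RMatch (.concat a b) d i j (munion μ1 μ2)
  | bind {x : ℕ} {a : RGX Sig} {d : List Sig} {i j : ℕ} {μ : VMapping}
      (h : RMatch a d i j μ) (hx : μ x = none) :
      RMatch (.bind x a) d i j (minsert x (i, j) μ)
  | starNil {a : RGX Sig} {d : List Sig} {i : ℕ} (h1 : 1 ≤ i) (h2 : i ≤ d.length + 1) :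
      RMatch (.star a) d i i emptyMapping
  | starCons {a : RGX Sig} {d : List Sig} {i k j : ℕ} {μ1 μ2 : VMapping}
      (h1 : RMatch a d i k μ1) (h2 : RMatch (.star a) d k j μ2) (hd : DisjointDom μ1 μ2) :
      RMatch (.star a) d i j (munion μ1 μ2)

/-- `⟦α⟧(d)`: mappings extracted with the full span. -/
def rgxSem (α : RGX Sig) (d : List Sig) : Set VMapping :=
  {μ | RMatch α d 1 (d.length + 1) μ}

/-- Sequential regex formulas. -/
def RGX.Sequential : RGX Sig → Prop
  | .empty => True
  | .eps => True
  | .letter _ => True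
  | .union a b => a.Sequential ∧ b.Sequential
  | .concat a b => a.Sequential ∧ b.Sequential ∧ Disjoint a.vars b.vars
  | .star a => a.Sequential ∧ a.vars = ∅
  | .bind x a => a.Sequential ∧ x ∉ a.vars

/-- Variable-free words over the alphabet (built from ε, letters and concatenation). -/
inductive RGX.IsWord : RGX Sig → Prop where
  | eps : RGX.IsWord .eps
  | letter (σ : Sig) : RGX.IsWord (.letter σ)
  | concat {a b : RGX Sig} : a.IsWord → b.IsWord → RGX.IsWord (.concat a b)

/-- Functional for a set `V` of variables. -/
inductive FunctionalFor : RGX Sig → Finset ℕ → Prop where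
  | word {α : RGX Sig} (h : α.IsWord) : FunctionalFor α ∅
  | union {a b : RGX Sig} {V : Finset ℕ} (ha : FunctionalFor a V) (hb : FunctionalFor b V) :
      FunctionalFor (.union a b) V
  | concat {a b : RGX Sig} {V : Finset ℕ} (V1 : Finset ℕ) (hsub : V1 ⊆ V)
      (ha : FunctionalFor a V1) (hb : FunctionalFor b (V \ V1)) :
      FunctionalFor (.concat a b) V
  | star {a : RGX Sig} (h : FunctionalFor a ∅) : FunctionalFor (.star a) ∅
  | bind {x : ℕ} {a : RGX Sig} {V : Finset ℕ} (h : FunctionalFor a (V.erase x)) :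
      FunctionalFor (.bind x a) V

def RGX.Functional (α : RGX Sig) : Prop := FunctionalFor α α.vars

/-- Disjunctive functional regex formulas: finite disjunctions of functional regex formulas. -/
inductive DisjFunctional : RGX Sig → Prop where
  | base {γ : RGX Sig} (h : γ.Functional) : DisjFunctional γ
  | union {a b : RGX Sig} (ha : DisjFunctional a) (hb : DisjFunctional b) :
      DisjFunctional (.union a b)

/-- Number of disjuncts of a (disjunctive) regex formula. -/
def countDisjuncts : RGX Sig → ℕ
  | .union a b => countDisjuncts a + countDisjuncts b
  | _ => 1

/-- Disjunction-free regex formulas. -/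
def RGX.DisjFree : RGX Sig → Prop
  | .union _ _ => False
  | .concat a b => a.DisjFree ∧ b.DisjFree
  | .star a => a.DisjFree
  | .bind _ a => a.DisjFree
  | _ => True

/-- `γ` is synchronized for `x`: no subformula `γ1 ∨ γ2` contains `x`. -/
def RGX.SyncFor : RGX Sig → ℕ → Prop
  | .union a b, x => (x ∉ a.vars ∧ x ∉ b.vars) ∧ a.SyncFor x ∧ b.SyncFor x
  | .concat a b, x => a.SyncFor x ∧ b.SyncFor x
  | .star a, x => a.SyncFor x
  | .bind _ a, x => a.SyncFor x
  | _, _ => True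

/-- Concatenation of a list of regex formulas. -/
def concatList : List (RGX Sig) → RGX Sig
  | [] => .eps
  | [α] => α
  | α :: rest => .concat α (concatList rest)

/-- Disjunction of a list of regex formulas. -/
def disjList : List (RGX Sig) → RGX Sig
  | [] => .empty
  | [α] => α
  | α :: rest => .union α (disjList rest)

/-! ### vset-automata -/

inductive VLabel (Sig : Type) where
  | eps : VLabel Sig
  | letter : Sig → VLabel Sig
  | openv : ℕ → VLabel Sig
  | closev : ℕ → VLabel Sig
deriving DecidableEq

structure VA (Sig : Type) [DecidableEq Sig] where
  q0 : ℕ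
  F : Finset ℕ
  δ : Finset (ℕ × VLabel Sig × ℕ)

variable [DecidableEq Sig]

/-- The states of a VA: the initial state and all states mentioned in `F` or in transitions. -/
def statesOf (A : VA Sig) : Finset ℕ :=
  insert A.q0 (A.F ∪ A.δ.image (fun t => t.1) ∪ A.δ.image (fun t => t.2.2))

def labelVars : VLabel Sig → Finset ℕ
  | .openv x => {x}
  | .closev x => {x}
  | _ => ∅

/-- `Vars(A)`: the variables mentioned in the transitions of `A`. -/
def varsOf (A : VA Sig) : Finset ℕ := A.δ.biUnion (fun t => labelVars t.2.1)

/-- Total size of a VA: number of states plus number of transitions. -/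
def vaSize (A : VA Sig) : ℕ := (statesOf A).card + A.δ.card

/-- `A.PathFrom p ls q`: a path (run segment) from `p` to `q` with label sequence `ls`. -/
inductive VA.PathFrom (A : VA Sig) : ℕ → List (VLabel Sig) → ℕ → Prop where
  | nil (q : ℕ) : VA.PathFrom A q [] q
  | cons {p q r : ℕ} {l : VLabel Sig} {ls : List (VLabel Sig)}
      (h : (p, l, q) ∈ A.δ) (htail : VA.PathFrom A q ls r) : VA.PathFrom A p (l :: ls) r

/-- The word (document) read by a sequence of labels. -/
def readWord : List (VLabel Sig) → List Sig :=
  List.filterMap fun l => match l with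
    | VLabel.letter σ => some σ
    | _ => none

def isLetterL : VLabel Sig → Bool
  | .letter _ => true
  | _ => false

/-- The current position in the document just before executing the `k`-th label. -/
def posAt (ls : List (VLabel Sig)) (k : ℕ) : ℕ := 1 + (ls.take k).countP isLetterL

/-- Validity of a run, given by its label sequence. -/
def ValidLabels (ls : List (VLabel Sig)) : Prop :=
  ∀ x : ℕ,
    ls.count (VLabel.openv x) ≤ 1 ∧
    ls.count (VLabel.closev x) ≤ 1 ∧
    ((VLabel.openv x) ∈ ls ↔ (VLabel.closev x) ∈ ls) ∧
    ∀ i j : ℕ, ls[i]? = some (VLabel.openv x) → ls[j]? = some (VLabel.closev x) →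
      posAt ls i ≤ posAt ls j

/-- The mapping `μ_ρ` extracted from a (valid accepting) run with label sequence `ls`. -/
def runMapping (ls : List (VLabel Sig)) : VMapping := fun x =>
  if (VLabel.openv x) ∈ ls then
    some (posAt ls (ls.idxOf (VLabel.openv x)), posAt ls (ls.idxOf (VLabel.closev x)))
  else none

/-- `ls` is the label sequence of an accepting run of `A`. -/
def AcceptsWith (A : VA Sig) (ls : List (VLabel Sig)) : Prop :=
  ∃ qf, VA.PathFrom A A.q0 ls qf ∧ qf ∈ A.F

/-- `⟦A⟧(d)`. -/
def vaSem (A : VA Sig) (d : List Sig) : Set VMapping :=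
  {μ | ∃ ls, AcceptsWith A ls ∧ readWord ls = d ∧ ValidLabels ls ∧ μ = runMapping ls}

/-- A VA is sequential if all of its accepting runs are valid. -/
def VA.Sequential (A : VA Sig) : Prop := ∀ ls, AcceptsWith A ls → ValidLabels ls

/-- A run from the initial state to `q` that is a prefix of an accepting run. -/
def PrefixRun (A : VA Sig) (ls : List (VLabel Sig)) (q : ℕ) : Prop :=
  VA.PathFrom A A.q0 ls q ∧ ∃ ls' qf, VA.PathFrom A q ls' qf ∧ qf ∈ A.F

/-- `A` is semi-functional for the variable `x`: no state has extended configuration `d`. -/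
def SemiFunctionalFor (A : VA Sig) (x : ℕ) : Prop :=
  ¬ ∃ q ls1 ls2, PrefixRun A ls1 q ∧ PrefixRun A ls2 q ∧
      (VLabel.closev x) ∈ ls1 ∧ (VLabel.openv x) ∉ ls2

def SemiFunctionalForSet (A : VA Sig) (X : Finset ℕ) : Prop :=
  ∀ x ∈ X, SemiFunctionalFor A x

/-- Functional VA: sequential, and every accepting run opens and closes every variable. -/
def FunctionalVA (A : VA Sig) : Prop :=
  A.Sequential ∧ ∀ ls, AcceptsWith A ls → ∀ x ∈ varsOf A,
    (VLabel.openv x) ∈ ls ∧ (VLabel.closev x) ∈ ls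

/-- `l` has a unique target state in `A`. -/
def UniqueTarget (A : VA Sig) (l : VLabel Sig) : Prop :=
  ∃ qt : ℕ, ∀ p q : ℕ, (p, l, q) ∈ A.δ → q = qt

/-- `A` is synchronized for the variable `x`. -/
def SyncForVA (A : VA Sig) (x : ℕ) : Prop :=
  UniqueTarget A (VLabel.openv x) ∧ UniqueTarget A (VLabel.closev x) ∧
    ((∀ ls, AcceptsWith A ls → (VLabel.openv x) ∈ ls ∧ (VLabel.closev x) ∈ ls) ∨
     (∀ ls, AcceptsWith A ls → (VLabel.openv x) ∉ ls ∧ (VLabel.closev x) ∉ ls))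

/-- `A` is the disjunctive functional VA with functional components `parts`. -/
def DisjFunctionalVAWith (A : VA Sig) (parts : List (VA Sig)) : Prop :=
  (∀ B ∈ parts, FunctionalVA B) ∧
  (parts.Pairwise fun B C => Disjoint (statesOf B) (statesOf C)) ∧
  (∀ B ∈ parts, A.q0 ∉ statesOf B) ∧
  A.F = parts.foldr (fun B s => B.F ∪ s) (∅ : Finset ℕ) ∧
  A.δ = (parts.map (fun B => (A.q0, (VLabel.eps : VLabel Sig), B.q0))).toFinset
        ∪ parts.foldr (fun B s => B.δ ∪ s) (∅ : Finset (ℕ × VLabel Sig × ℕ))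

def DisjFunctionalVA (A : VA Sig) : Prop := ∃ parts, DisjFunctionalVAWith A parts

/-! ### 3CNF formulas -/

/-- A 3CNF clause over `n` Boolean variables: a triple of literals; `(i, true)` is `xᵢ`,
`(i, false)` is `¬xᵢ`. -/
def Clause3 (n : ℕ) : Type := (Fin n × Bool) × (Fin n × Bool) × (Fin n × Bool)

def litsOf {n : ℕ} (c : Clause3 n) : List (Fin n × Bool) := [c.1, c.2.1, c.2.2]

def clauseSat {n : ℕ} (τ : Fin n → Bool) (c : Clause3 n) : Prop :=
  ∃ l ∈ litsOf c, τ l.1 = l.2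

def Sat3 {n m : ℕ} (φ : Fin m → Clause3 n) : Prop :=
  ∃ τ : Fin n → Bool, ∀ j, clauseSat τ (φ j)

end Spanners

namespace Spanners

variable {Sig : Type} [DecidableEq Sig]

set_option linter.unusedSectionVars false

/-! ### Auxiliary constructions for statement8 -/

/-- Encoded product state: component tag `X`, original state `q`, opened set `S`, closed set `T`. -/
def encSt (X : Finset ℕ) (q : ℕ) (S T : Finset ℕ) : ℕ :=
  Nat.pair (Encodable.encode X)
    (Nat.pair q (Nat.pair (Encodable.encode S) (Encodable.encode T))) + 1

lemma encSt_ne_zero (X : Finset ℕ) (q : ℕ) (S T : Finset ℕ) : encSt X q S T ≠ 0 := by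
  simp [encSt]

lemma encSt_inj {X X' : Finset ℕ} {q q' : ℕ} {S S' T T' : Finset ℕ}
    (h : encSt X q S T = encSt X' q' S' T') : X = X' ∧ q = q' ∧ S = S' ∧ T = T' := by
  unfold encSt at h
  have h1 : Nat.pair (Encodable.encode X)
      (Nat.pair q (Nat.pair (Encodable.encode S) (Encodable.encode T))) =
      Nat.pair (Encodable.encode X')
      (Nat.pair q' (Nat.pair (Encodable.encode S') (Encodable.encode T'))) := by omega
  rw [Nat.pair_eq_pair] at h1
  obtain ⟨hX, h2⟩ := h1
  rw [Nat.pair_eq_pair] at h2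
  obtain ⟨hq, h3⟩ := h2
  rw [Nat.pair_eq_pair] at h3
  exact ⟨Encodable.encode_injective hX, hq, Encodable.encode_injective h3.1,
    Encodable.encode_injective h3.2⟩

def openVar? : VLabel Sig → Option ℕ
  | .openv x => some x
  | _ => none

def closeVar? : VLabel Sig → Option ℕ
  | .closev x => some x
  | _ => none

def opensOf (ls : List (VLabel Sig)) : Finset ℕ := (ls.filterMap openVar?).toFinset

def closesOf (ls : List (VLabel Sig)) : Finset ℕ := (ls.filterMap closeVar?).toFinset

lemma mem_opensOf {ls : List (VLabel Sig)} {x : ℕ} :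
    x ∈ opensOf ls ↔ (VLabel.openv x) ∈ ls := by
  simp only [opensOf, List.mem_toFinset, List.mem_filterMap]
  constructor
  · rintro ⟨l, hl, he⟩; cases l <;> simp_all [openVar?]
  · intro hmem; exact ⟨_, hmem, rfl⟩

lemma mem_closesOf {ls : List (VLabel Sig)} {x : ℕ} :
    x ∈ closesOf ls ↔ (VLabel.closev x) ∈ ls := by
  simp only [closesOf, List.mem_toFinset, List.mem_filterMap]
  constructor
  · rintro ⟨l, hl, he⟩; cases l <;> simp_all [closeVar?]
  · intro hmem; exact ⟨_, hmem, rfl⟩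

@[simp] lemma opensOf_nil : opensOf ([] : List (VLabel Sig)) = ∅ := rfl
@[simp] lemma closesOf_nil : closesOf ([] : List (VLabel Sig)) = ∅ := rfl

@[simp] lemma opensOf_cons_eps (ls : List (VLabel Sig)) :
    opensOf (VLabel.eps :: ls) = opensOf ls := by simp [opensOf, openVar?, List.filterMap_cons]
@[simp] lemma opensOf_cons_letter (σ : Sig) (ls : List (VLabel Sig)) :
    opensOf (VLabel.letter σ :: ls) = opensOf ls := by simp [opensOf, openVar?, List.filterMap_cons]
@[simp] lemma opensOf_cons_close (x : ℕ) (ls : List (VLabel Sig)) :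
    opensOf (VLabel.closev x :: ls) = opensOf ls := by simp [opensOf, openVar?, List.filterMap_cons]
@[simp] lemma opensOf_cons_open (x : ℕ) (ls : List (VLabel Sig)) :
    opensOf (VLabel.openv x :: ls) = insert x (opensOf ls) := by
  simp [opensOf, openVar?, List.filterMap_cons]

@[simp] lemma closesOf_cons_eps (ls : List (VLabel Sig)) :
    closesOf (VLabel.eps :: ls) = closesOf ls := by simp [closesOf, closeVar?, List.filterMap_cons]
@[simp] lemma closesOf_cons_letter (σ : Sig) (ls : List (VLabel Sig)) :
    closesOf (VLabel.letter σ :: ls) = closesOf ls := by simp [closesOf, closeVar?, List.filterMap_cons]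
@[simp] lemma closesOf_cons_open (x : ℕ) (ls : List (VLabel Sig)) :
    closesOf (VLabel.openv x :: ls) = closesOf ls := by simp [closesOf, closeVar?, List.filterMap_cons]
@[simp] lemma closesOf_cons_close (x : ℕ) (ls : List (VLabel Sig)) :
    closesOf (VLabel.closev x :: ls) = insert x (closesOf ls) := by
  simp [closesOf, closeVar?, List.filterMap_cons]

/-- Transition transformer for the component automaton. -/
def trB (X S T : Finset ℕ) : (ℕ × VLabel Sig × ℕ) → Option (ℕ × VLabel Sig × ℕ)
  | (p, VLabel.eps, q) => some (encSt X p S T, VLabel.eps, encSt X q S T)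
  | (p, VLabel.letter σ, q) => some (encSt X p S T, VLabel.letter σ, encSt X q S T)
  | (p, VLabel.openv x, q) =>
      if x ∈ X then some (encSt X p S T, VLabel.openv x, encSt X q (insert x S) T) else none
  | (p, VLabel.closev x, q) =>
      if x ∈ X then some (encSt X p S T, VLabel.closev x, encSt X q S (insert x T)) else none

/-- The component automaton for the subset `X` of variables. -/
def compB (A : VA Sig) (X : Finset ℕ) : VA Sig where
  q0 := encSt X A.q0 ∅ ∅
  F := A.F.image (fun q => encSt X q X X)
  δ := (A.δ ×ˢ (X.powerset ×ˢ X.powerset)).biUnion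
        (fun pr => (trB X pr.2.1 pr.2.2 pr.1).toFinset)

lemma mem_compB_delta {A : VA Sig} {X : Finset ℕ} {t' : ℕ × VLabel Sig × ℕ} :
    t' ∈ (compB A X).δ ↔
      ∃ t ∈ A.δ, ∃ S T : Finset ℕ, S ⊆ X ∧ T ⊆ X ∧ trB X S T t = some t' := by
  simp only [compB, Finset.mem_biUnion, Finset.mem_product, Option.mem_toFinset,
    Option.mem_def, Finset.mem_powerset]
  constructor
  · rintro ⟨⟨t, S, T⟩, ⟨ht, hS, hT⟩, he⟩; exact ⟨t, ht, S, T, hS, hT, he⟩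
  · rintro ⟨t, ht, S, T, hS, hT, he⟩; exact ⟨⟨t, S, T⟩, ⟨ht, hS, hT⟩, he⟩

/-- The list of functional components. -/
noncomputable def partsOf (A : VA Sig) : List (VA Sig) :=
  ((varsOf A).powerset.toList).map (compB A)

/-- The disjunctive functional automaton. -/
noncomputable def bigA (A : VA Sig) : VA Sig where
  q0 := 0
  F := (partsOf A).foldr (fun B s => B.F ∪ s) (∅ : Finset ℕ)
  δ := ((partsOf A).map (fun B => (0, (VLabel.eps : VLabel Sig), B.q0))).toFinset
        ∪ (partsOf A).foldr (fun B s => B.δ ∪ s) (∅ : Finset (ℕ × VLabel Sig × ℕ))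

lemma mem_foldr_F {L : List (VA Sig)} {q : ℕ} :
    q ∈ L.foldr (fun B s => B.F ∪ s) (∅ : Finset ℕ) ↔ ∃ B ∈ L, q ∈ B.F := by
  induction L with
  | nil => simp
  | cons C L ih => simp [ih]

lemma mem_foldr_delta {L : List (VA Sig)} {t : ℕ × VLabel Sig × ℕ} :
    t ∈ L.foldr (fun B s => B.δ ∪ s) (∅ : Finset (ℕ × VLabel Sig × ℕ)) ↔
      ∃ B ∈ L, t ∈ B.δ := by
  induction L with
  | nil => simp
  | cons C L ih => simp [ih]

/-- Decoding runs of the component automaton into runs of `A`. -/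
lemma path_compB_decode {A : VA Sig} {X : Finset ℕ} {s : ℕ} {ls : List (VLabel Sig)} {f : ℕ}
    (hp : (compB A X).PathFrom s ls f) :
    ∀ p S T, S ⊆ X → T ⊆ X → s = encSt X p S T →
    ∃ q, A.PathFrom p ls q ∧ f = encSt X q (S ∪ opensOf ls) (T ∪ closesOf ls) := by
  induction hp with
  | nil r =>
    intro p S T hS hT hs
    exact ⟨p, VA.PathFrom.nil p, by simp [hs]⟩
  | @cons s m r l ls' htr htail ih =>
    intro p S T hS hT hs
    rcases mem_compB_delta.1 htr with ⟨t, ht, S', T', hS', hT', he⟩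
    obtain ⟨p', l', q'⟩ := t
    cases l' with
    | eps =>
      simp only [trB, Option.some.injEq, Prod.mk.injEq] at he
      obtain ⟨he1, he2, he3⟩ := he
      rw [hs] at he1
      obtain ⟨_, hp', hSe, hTe⟩ := encSt_inj he1.symm
      subst hp' hSe hTe he2
      obtain ⟨q, hq, hf⟩ := ih q' S T hS hT he3.symm
      exact ⟨q, VA.PathFrom.cons ht hq, by simpa using hf⟩
    | letter σ =>
      simp only [trB, Option.some.injEq, Prod.mk.injEq] at he
      obtain ⟨he1, he2, he3⟩ := he
      rw [hs] at he1
      obtain ⟨_, hp', hSe, hTe⟩ := encSt_inj he1.symm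
      subst hp' hSe hTe
      obtain ⟨q, hq, hf⟩ := ih q' S T hS hT he3.symm
      refine ⟨q, ?_, by rw [hf, ← he2]; simp⟩
      rw [← he2]; exact VA.PathFrom.cons ht hq
    | openv x =>
      by_cases hx : x ∈ X
      · simp only [trB, hx, if_true, Option.some.injEq, Prod.mk.injEq] at he
        obtain ⟨he1, he2, he3⟩ := he
        rw [hs] at he1
        obtain ⟨_, hp', hSe, hTe⟩ := encSt_inj he1.symm
        subst hp' hSe hTe
        obtain ⟨q, hq, hf⟩ := ih q' (insert x S) T (Finset.insert_subset hx hS) hT he3.symm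
        refine ⟨q, ?_, ?_⟩
        · rw [← he2]; exact VA.PathFrom.cons ht hq
        · rw [hf, ← he2]
          simp only [opensOf_cons_open, closesOf_cons_open, Finset.insert_union,
            Finset.union_insert]
      · simp [trB, hx] at he
    | closev x =>
      by_cases hx : x ∈ X
      · simp only [trB, hx, if_true, Option.some.injEq, Prod.mk.injEq] at he
        obtain ⟨he1, he2, he3⟩ := he
        rw [hs] at he1
        obtain ⟨_, hp', hSe, hTe⟩ := encSt_inj he1.symm
        subst hp' hSe hTe
        obtain ⟨q, hq, hf⟩ := ih q' S (insert x T) hS (Finset.insert_subset hx hT) he3.symm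
        refine ⟨q, ?_, ?_⟩
        · rw [← he2]; exact VA.PathFrom.cons ht hq
        · rw [hf, ← he2]
          simp only [opensOf_cons_close, closesOf_cons_close, Finset.insert_union,
            Finset.union_insert]
      · simp [trB, hx] at he

/-- Encoding runs of `A` into runs of the component automaton. -/
lemma path_compB_encode {A : VA Sig} {X : Finset ℕ} {p : ℕ} {ls : List (VLabel Sig)} {q : ℕ}
    (hp : A.PathFrom p ls q) :
    ∀ S T, S ⊆ X → T ⊆ X → opensOf ls ⊆ X → closesOf ls ⊆ X →
    (compB A X).PathFrom (encSt X p S T) ls (encSt X q (S ∪ opensOf ls) (T ∪ closesOf ls)) := by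
  induction hp with
  | nil r =>
    intro S T hS hT _ _
    simpa using VA.PathFrom.nil (A := compB A X) (encSt X r S T)
  | @cons p' m r l ls' htr htail ih =>
    intro S T hS hT ho hc
    cases l with
    | eps =>
      refine VA.PathFrom.cons (q := encSt X m S T) ?_ ?_
      · exact mem_compB_delta.2 ⟨(p', VLabel.eps, m), htr, S, T, hS, hT, rfl⟩
      · simpa using ih S T hS hT (by simpa using ho) (by simpa using hc)
    | letter σ =>
      refine VA.PathFrom.cons (q := encSt X m S T) ?_ ?_
      · exact mem_compB_delta.2 ⟨(p', VLabel.letter σ, m), htr, S, T, hS, hT, rfl⟩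
      · simpa using ih S T hS hT (by simpa using ho) (by simpa using hc)
    | openv x =>
      have hx : x ∈ X := ho (by simp)
      refine VA.PathFrom.cons (q := encSt X m (insert x S) T) ?_ ?_
      · exact mem_compB_delta.2 ⟨(p', VLabel.openv x, m), htr, S, T, hS, hT, by simp [trB, hx]⟩
      · have := ih (insert x S) T (Finset.insert_subset hx hS) hT
          (fun y hy => ho (by simp [hy])) (by simpa using hc)
        have heq : insert x S ∪ opensOf ls' = S ∪ opensOf (VLabel.openv x :: ls') := by
          simp only [opensOf_cons_open, Finset.insert_union, Finset.union_insert]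
        rw [heq] at this
        simpa using this
    | closev x =>
      have hx : x ∈ X := hc (by simp)
      refine VA.PathFrom.cons (q := encSt X m S (insert x T)) ?_ ?_
      · exact mem_compB_delta.2 ⟨(p', VLabel.closev x, m), htr, S, T, hS, hT, by simp [trB, hx]⟩
      · have := ih S (insert x T) hS (Finset.insert_subset hx hT)
          (by simpa using ho) (fun y hy => hc (by simp [hy]))
        have heq : insert x T ∪ closesOf ls' = T ∪ closesOf (VLabel.closev x :: ls') := by
          simp only [closesOf_cons_close, Finset.insert_union, Finset.union_insert]
        rw [heq] at this
        simpa using this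

/-- Variables opened or closed along a run of `A` lie in `varsOf A`. -/
lemma path_vars_sub {A : VA Sig} {p : ℕ} {ls : List (VLabel Sig)} {q : ℕ}
    (hp : A.PathFrom p ls q) : opensOf ls ⊆ varsOf A ∧ closesOf ls ⊆ varsOf A := by
  induction hp with
  | nil r => simp
  | @cons p' m r l ls' htr htail ih =>
    have hl : labelVars l ⊆ varsOf A := fun y hy =>
      Finset.mem_biUnion.2 ⟨(p', l, m), htr, hy⟩
    cases l with
    | eps => simpa using ih
    | letter σ => simpa using ih
    | openv x =>
      have hx : x ∈ varsOf A := hl (by simp [labelVars])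
      constructor
      · simpa using Finset.insert_subset hx ih.1
      · simpa using ih.2
    | closev x =>
      have hx : x ∈ varsOf A := hl (by simp [labelVars])
      constructor
      · simpa using ih.1
      · simpa using Finset.insert_subset hx ih.2

/-- Acceptance characterization for components. -/
lemma accepts_compB_iff {A : VA Sig} {X : Finset ℕ} {ls : List (VLabel Sig)} :
    AcceptsWith (compB A X) ls ↔
      AcceptsWith A ls ∧ opensOf ls = X ∧ closesOf ls = X := by
  constructor
  · rintro ⟨qf, hpath, hqf⟩
    rcases Finset.mem_image.1 hqf with ⟨qA, hqA, hqf'⟩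
    obtain ⟨q, hq, hf⟩ := path_compB_decode hpath A.q0 ∅ ∅ (by simp) (by simp) rfl
    rw [← hqf'] at hf
    obtain ⟨_, hq', hS, hT⟩ := encSt_inj hf.symm
    subst hq'
    simp only [Finset.empty_union] at hS hT
    exact ⟨⟨q, hq, hqA⟩, hS, hT⟩
  · rintro ⟨⟨qf, hpath, hqf⟩, ho, hc⟩
    refine ⟨encSt X qf X X, ?_, Finset.mem_image.2 ⟨qf, hqf, rfl⟩⟩
    have := path_compB_encode (X := X) hpath ∅ ∅ (by simp) (by simp) ho.le hc.le
    exact (by simpa [ho, hc] using this :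
      (compB A X).PathFrom (encSt X A.q0 ∅ ∅) ls (encSt X qf X X))

/-- Shape of transitions produced by `trB`. -/
lemma trB_shape {X S T : Finset ℕ} {t t' : ℕ × VLabel Sig × ℕ}
    (he : trB X S T t = some t') :
    ∃ S2 T2, t' = (encSt X t.1 S T, t.2.1, encSt X t.2.2 S2 T2) ∧ labelVars t.2.1 ⊆ X := by
  obtain ⟨p, l, q⟩ := t
  cases l with
  | eps =>
    simp only [trB, Option.some_inj] at he
    exact ⟨S, T, he.symm, by simp [labelVars]⟩
  | letter σ =>
    simp only [trB, Option.some_inj] at he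
    exact ⟨S, T, he.symm, by simp [labelVars]⟩
  | openv x =>
    by_cases hx : x ∈ X
    · rw [trB, if_pos hx, Option.some_inj] at he
      exact ⟨insert x S, T, he.symm, by simp [labelVars, hx]⟩
    · simp [trB, hx] at he
  | closev x =>
    by_cases hx : x ∈ X
    · rw [trB, if_pos hx, Option.some_inj] at he
      exact ⟨S, insert x T, he.symm, by simp [labelVars, hx]⟩
    · simp [trB, hx] at he

/-- Every state of a component is an encoded state. -/
lemma statesOf_compB {A : VA Sig} {X : Finset ℕ} {s : ℕ} (hs : s ∈ statesOf (compB A X)) :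
    ∃ q S T, s = encSt X q S T := by
  simp only [statesOf, Finset.mem_insert, Finset.mem_union, Finset.mem_image] at hs
  rcases hs with hs | ⟨⟨hs | ⟨t', ht', hts⟩⟩ | ⟨t', ht', hts⟩⟩
  · exact ⟨A.q0, ∅, ∅, hs⟩
  · rcases Finset.mem_image.1 hs with ⟨qA, _, he⟩
    exact ⟨qA, X, X, he.symm⟩
  · rcases mem_compB_delta.1 ht' with ⟨t, _, S, T, _, _, he⟩
    obtain ⟨S2, T2, rfl, -⟩ := trB_shape he
    exact ⟨t.1, S, T, hts.symm⟩
  · rcases mem_compB_delta.1 ht' with ⟨t, _, S, T, _, _, he⟩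
    obtain ⟨S2, T2, rfl, -⟩ := trB_shape he
    exact ⟨t.2.2, S2, T2, hts.symm⟩

/-- Variables of a component lie in `X`. -/
lemma varsOf_compB_sub {A : VA Sig} {X : Finset ℕ} : varsOf (compB A X) ⊆ X := by
  intro y hy
  rcases Finset.mem_biUnion.1 hy with ⟨t', ht', hyt⟩
  rcases mem_compB_delta.1 ht' with ⟨t, _, S, T, _, _, he⟩
  obtain ⟨S2, T2, rfl, hsub⟩ := trB_shape he
  exact hsub hyt

/-- Each component is functional (given that `A` is sequential). -/
lemma compB_functional {A : VA Sig} (h : A.Sequential) (X : Finset ℕ) :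
    FunctionalVA (compB A X) := by
  constructor
  · intro ls hls
    exact h ls (accepts_compB_iff.1 hls).1
  · intro ls hls x hx
    obtain ⟨_, ho, hc⟩ := accepts_compB_iff.1 hls
    have hxX : x ∈ X := varsOf_compB_sub hx
    exact ⟨mem_opensOf.1 (ho ▸ hxX), mem_closesOf.1 (hc ▸ hxX)⟩

lemma mem_partsOf {A B : VA Sig} :
    B ∈ partsOf A ↔ ∃ X, X ⊆ varsOf A ∧ B = compB A X := by
  simp only [partsOf, List.mem_map, Finset.mem_toList, Finset.mem_powerset]
  constructor
  · rintro ⟨X, hX, rfl⟩; exact ⟨X, hX, rfl⟩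
  · rintro ⟨X, hX, rfl⟩; exact ⟨X, hX, rfl⟩

lemma mem_bigA_delta {A : VA Sig} {t : ℕ × VLabel Sig × ℕ} :
    t ∈ (bigA A).δ ↔
      (∃ X, X ⊆ varsOf A ∧ t = (0, VLabel.eps, (compB A X).q0)) ∨
      (∃ X, X ⊆ varsOf A ∧ t ∈ (compB A X).δ) := by
  simp only [bigA, Finset.mem_union, List.mem_toFinset, List.mem_map, mem_foldr_delta]
  constructor
  · rintro (⟨B, hB, he⟩ | ⟨B, hB, ht⟩)
    · rcases mem_partsOf.1 hB with ⟨X, hX, rfl⟩; exact Or.inl ⟨X, hX, he.symm⟩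
    · rcases mem_partsOf.1 hB with ⟨X, hX, rfl⟩; exact Or.inr ⟨X, hX, ht⟩
  · rintro (⟨X, hX, he⟩ | ⟨X, hX, ht⟩)
    · exact Or.inl ⟨compB A X, mem_partsOf.2 ⟨X, hX, rfl⟩, he.symm⟩
    · exact Or.inr ⟨compB A X, mem_partsOf.2 ⟨X, hX, rfl⟩, ht⟩

lemma path_mono {B C : VA Sig} {s : ℕ} {ls : List (VLabel Sig)} {f : ℕ}
    (hp : B.PathFrom s ls f) (hsub : B.δ ⊆ C.δ) : C.PathFrom s ls f := by
  induction hp with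
  | nil r => exact .nil r
  | cons htr _ ih => exact .cons (hsub htr) ih

/-- A path in `bigA A` starting at an encoded state stays inside the component. -/
lemma path_bigA_comp {A : VA Sig} {s : ℕ} {ls : List (VLabel Sig)} {f : ℕ}
    (hp : (bigA A).PathFrom s ls f) :
    ∀ X q S T, s = encSt X q S T → (compB A X).PathFrom s ls f := by
  induction hp with
  | nil r => intro X q S T _; exact .nil r
  | @cons p m r l ls' htr htail ih =>
    intro X q S T hs
    rcases mem_bigA_delta.1 htr with ⟨Y, hY, he⟩ | ⟨Y, hY, hmem⟩
    · exfalso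
      have hp0 : p = 0 := congrArg Prod.fst he
      exact encSt_ne_zero X q S T (hs ▸ hp0)
    · rcases mem_compB_delta.1 hmem with ⟨t, htA, S', T', hS', hT', heq⟩
      obtain ⟨S2, T2, hform, -⟩ := trB_shape heq
      have hp1 : p = encSt Y t.1 S' T' := congrArg Prod.fst hform
      have hm : m = encSt Y t.2.2 S2 T2 := congrArg (fun z => z.2.2) hform
      have hXY : Y = X := (encSt_inj ((hp1.symm.trans hs))).1
      subst hXY
      exact .cons hmem (ih Y t.2.2 S2 T2 hm)

/-- Acceptance characterization for `bigA`. -/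
lemma accepts_bigA_iff {A : VA Sig} {ls : List (VLabel Sig)} :
    AcceptsWith (bigA A) ls ↔
      ∃ X, X ⊆ varsOf A ∧ ∃ ls', ls = VLabel.eps :: ls' ∧ AcceptsWith (compB A X) ls' := by
  constructor
  · rintro ⟨qf, hpath, hqf⟩
    rcases mem_foldr_F.1 hqf with ⟨B, hB, hqfB⟩
    rcases mem_partsOf.1 hB with ⟨Y, hY, rfl⟩
    cases hpath with
    | nil =>
      exfalso
      rcases Finset.mem_image.1 hqfB with ⟨qA, _, he⟩
      exact encSt_ne_zero _ _ _ _ he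
    | @cons _ m _ l ls' htr htail =>
      rcases mem_bigA_delta.1 htr with ⟨X, hX, he⟩ | ⟨X, hX, hmem⟩
      · have hl : l = VLabel.eps := congrArg (fun z => z.2.1) he
        have hm : m = (compB A X).q0 := congrArg (fun z => z.2.2) he
        subst hl
        have hm' : m = encSt X A.q0 ∅ ∅ := hm
        have hcomp := path_bigA_comp htail X A.q0 ∅ ∅ hm'
        rw [hm'] at hcomp
        obtain ⟨qq, hqq, hf⟩ := path_compB_decode hcomp A.q0 ∅ ∅ (by simp) (by simp) rfl
        rcases Finset.mem_image.1 hqfB with ⟨qA, hqA, heqA⟩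
        have hXY : X = Y := (encSt_inj (hf.symm.trans heqA.symm)).1
        subst hXY
        exact ⟨X, hX, ls', rfl, ⟨qf, hcomp, hqfB⟩⟩
      · exfalso
        rcases mem_compB_delta.1 hmem with ⟨t, _, S', T', _, _, heq⟩
        obtain ⟨S2, T2, hform, -⟩ := trB_shape heq
        have h0 : (0 : ℕ) = encSt X t.1 S' T' := congrArg Prod.fst hform
        exact encSt_ne_zero X t.1 S' T' h0.symm
  · rintro ⟨X, hX, ls', rfl, ⟨qf, hpath, hqf⟩⟩
    refine ⟨qf, ?_, mem_foldr_F.2 ⟨compB A X, mem_partsOf.2 ⟨X, hX, rfl⟩, hqf⟩⟩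
    refine VA.PathFrom.cons ?_ (path_mono hpath ?_)
    · exact mem_bigA_delta.2 (Or.inl ⟨X, hX, rfl⟩)
    · intro t ht; exact mem_bigA_delta.2 (Or.inr ⟨X, hX, ht⟩)

/-! ### Epsilon-prefix lemmas -/

lemma readWord_eps_cons (ls : List (VLabel Sig)) :
    readWord (VLabel.eps :: ls) = readWord ls := by
  simp [readWord, List.filterMap_cons]

lemma posAt_eps_cons (ls : List (VLabel Sig)) (k : ℕ) :
    posAt (VLabel.eps :: ls) (k + 1) = posAt ls k := by
  simp [posAt, List.take_succ_cons, List.countP_cons, isLetterL]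

lemma validLabels_eps_cons (ls : List (VLabel Sig)) :
    ValidLabels (VLabel.eps :: ls) ↔ ValidLabels ls := by
  constructor
  · intro hv x
    obtain ⟨h1, h2, h3, h4⟩ := hv x
    refine ⟨?_, ?_, ?_, ?_⟩
    · simpa [List.count_cons] using h1
    · simpa [List.count_cons] using h2
    · simpa using h3
    · intro i j hi hj
      have := h4 (i + 1) (j + 1) (by simpa using hi) (by simpa using hj)
      simpa [posAt_eps_cons] using this
  · intro hv x
    obtain ⟨h1, h2, h3, h4⟩ := hv x
    refine ⟨?_, ?_, ?_, ?_⟩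
    · simpa [List.count_cons] using h1
    · simpa [List.count_cons] using h2
    · simpa using h3
    · intro i j hi hj
      match i, hi with
      | 0, hi => simp at hi
      | (i' + 1), hi =>
        match j, hj with
        | 0, hj => simp at hj
        | (j' + 1), hj =>
          rw [List.getElem?_cons_succ] at hi hj
          rw [posAt_eps_cons, posAt_eps_cons]
          exact h4 i' j' hi hj

lemma runMapping_eps_cons (ls : List (VLabel Sig)) :
    runMapping (VLabel.eps :: ls) = runMapping ls := by
  funext x
  by_cases hmem : (VLabel.openv x) ∈ ls
  · have h1 : (VLabel.openv x) ∈ (VLabel.eps :: ls) := List.mem_cons_of_mem _ hmem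
    rw [runMapping, runMapping, if_pos h1, if_pos hmem,
      List.idxOf_cons_ne _ (by simp : (VLabel.eps : VLabel Sig) ≠ VLabel.openv x),
      List.idxOf_cons_ne _ (by simp : (VLabel.eps : VLabel Sig) ≠ VLabel.closev x)]
    simp only [Nat.succ_eq_add_one, posAt_eps_cons]
  · have h1 : (VLabel.openv x) ∉ (VLabel.eps :: ls) := by simp [hmem]
    rw [runMapping, runMapping, if_neg h1, if_neg hmem]

/-! ### Final assembly -/

lemma disjoint_statesOf_compB {A : VA Sig} {X Y : Finset ℕ} (hXY : X ≠ Y) :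
    Disjoint (statesOf (compB A X)) (statesOf (compB A Y)) := by
  rw [Finset.disjoint_left]
  intro s hsX hsY
  obtain ⟨q, S, T, h1⟩ := statesOf_compB hsX
  obtain ⟨q', S', T', h2⟩ := statesOf_compB hsY
  exact hXY (encSt_inj (h1.symm.trans h2)).1

lemma disjfun_bigA (A : VA Sig) (h : A.Sequential) :
    DisjFunctionalVAWith (bigA A) (partsOf A) := by
  refine ⟨?_, ?_, ?_, rfl, rfl⟩
  · intro B hB
    rcases mem_partsOf.1 hB with ⟨X, _, rfl⟩
    exact compB_functional h X
  · rw [partsOf, List.pairwise_map]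
    exact List.Pairwise.imp (fun hne => disjoint_statesOf_compB hne)
      ((varsOf A).powerset.nodup_toList)
  · intro B hB hmem
    rcases mem_partsOf.1 hB with ⟨X, _, rfl⟩
    obtain ⟨q, S, T, he⟩ := statesOf_compB hmem
    exact encSt_ne_zero X q S T he.symm

lemma vaSem_bigA (A : VA Sig) (h : A.Sequential) (d : List Sig) :
    vaSem (bigA A) d = vaSem A d := by
  ext μ
  constructor
  · rintro ⟨ls, hacc, hread, hvalid, hμ⟩
    rcases accepts_bigA_iff.1 hacc with ⟨X, hX, ls', rfl, hacc'⟩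
    have hA := (accepts_compB_iff.1 hacc').1
    exact ⟨ls', hA, by rw [← readWord_eps_cons]; exact hread,
      (validLabels_eps_cons ls').1 hvalid, by rw [hμ, runMapping_eps_cons]⟩
  · rintro ⟨ls, hacc, hread, hvalid, hμ⟩
    obtain ⟨qf, hpath, hqf⟩ := hacc
    have hsub := path_vars_sub hpath
    have hoc : closesOf ls = opensOf ls := by
      ext y
      rw [mem_opensOf, mem_closesOf]
      exact ((hvalid y).2.2.1).symm
    refine ⟨VLabel.eps :: ls, ?_, by rw [readWord_eps_cons]; exact hread,
      (validLabels_eps_cons ls).2 hvalid, by rw [hμ, runMapping_eps_cons]⟩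
    exact accepts_bigA_iff.2 ⟨opensOf ls, hsub.1, ls, rfl,
      accepts_compB_iff.2 ⟨⟨qf, hpath, hqf⟩, rfl, hoc⟩⟩

theorem statement8 (A : VA Sig) (h : A.Sequential) :
    ∃ A' : VA Sig, DisjFunctionalVA A' ∧ ∀ d : List Sig, vaSem A' d = vaSem A d := by
  exact ⟨bigA A, ⟨partsOf A, disjfun_bigA A h⟩, fun d => vaSem_bigA A h d⟩

end Spanners
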